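/- Let a1, a2, b1, b2, b12, c2, d2, a be positive real numbers, n a positive integer, and let f(x) = x^n/(a^n + x^n) be the Hill function. Suppose b2^2 < b1 and suppose y10 ∈ (0, a1*b1/(a2*b2)) satisfies α*y10^(n+1) − β*y10^n + γ*y10 − δ = 0, where α = a2*(b12 + b2*c2*d2), β = a1*b1*c2*d2, γ = a2*b2*c2*d2*a^n, δ = a1*b1*c2*d2*a^n. Then, setting x10 = a1/a2, y20 = (a1*b1 − a2*b2*y10)/(b12*y10*a2), and x20 = d2*y20, the point (x10, y10, x20, y20) is an equilibrium of the P53-Mdm2 system, i.e. a1 − a2*x10 = 0, b1*x10 − b2*y10 − b12*y10*y20 = 0, f(y10) − c2*x20 = 0, and x20 − d2*y20 = 0. -/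

import Mathlib

/-- Equilibrium of the P53-Mdm2 system. -/
theorem stmt_0 (a1 a2 b1 b2 b12 c2 d2 a : ℝ) (n : ℕ)
    (ha1 : 0 < a1) (ha2 : 0 < a2) (hb1 : 0 < b1) (hb2 : 0 < b2)
    (hb12 : 0 < b12) (hc2 : 0 < c2) (hd2 : 0 < d2) (ha : 0 < a) (hn : 0 < n)
    (f : ℝ → ℝ) (hf : ∀ x, f x = x ^ n / (a ^ n + x ^ n))
    (hb2b1 : b2 ^ 2 < b1)
    (y10 : ℝ) (hy10pos : 0 < y10) (hy10lt : y10 < a1 * b1 / (a2 * b2))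
    (hroot : a2 * (b12 + b2 * c2 * d2) * y10 ^ (n + 1)
        - a1 * b1 * c2 * d2 * y10 ^ n
        + a2 * b2 * c2 * d2 * a ^ n * y10
        - a1 * b1 * c2 * d2 * a ^ n = 0)
    (x10 y20 x20 : ℝ)
    (hx10 : x10 = a1 / a2)
    (hy20 : y20 = (a1 * b1 - a2 * b2 * y10) / (b12 * y10 * a2))
    (hx20 : x20 = d2 * y20) :
    a1 - a2 * x10 = 0 ∧
    b1 * x10 - b2 * y10 - b12 * y10 * y20 = 0 ∧
    f y10 - c2 * x20 = 0 ∧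
    x20 - d2 * y20 = 0 := by
  have hden : (0:ℝ) < a ^ n + y10 ^ n := by positivity
  have ha2' : a2 ≠ 0 := ne_of_gt ha2
  have hy10' : y10 ≠ 0 := ne_of_gt hy10pos
  have hb12' : b12 ≠ 0 := ne_of_gt hb12
  refine ⟨by rw [hx10]; field_simp; ring, by rw [hx10, hy20]; field_simp; ring, ?_, by rw [hx20]; ring⟩
  rw [hf, hx20, hy20]
  field_simp
  linear_combination hroot
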